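/- Let m ≥ 1 and let k_1,…,k_m, l_1,…,l_m be integers with k_i ≥ 1 and l_i ≥ 1 for all i and l_m ≥ 2. Let λ ∈ ℂ be not a positive integer and set λ′ = λ − 1. Then [{(n−1)^{k_1}, l_1, (n−1)^{k_2}, l_2, …, (n−1)^{k_m}, l_m}; λ] = [{n^{k_1}, l_1, n^{k_2}, l_2, …, n^{k_m}, l_m}; λ′] − (1/λ′)·[{n^{k_1}, l_1, n^{k_2}, l_2, …, n^{k_m}, l_m−1}; λ′]; here on the left every block carries the shift (n−1) and the bracket is evaluated at λ, while on the right all blocks are unshifted and the brackets are evaluated at λ′. -/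

import Mathlib

/-- Strictly decreasing sequences of positive integers of length `L`
(encoded as functions `ℕ → ℕ` vanishing from `L` on). -/
def DecSeq (L : ℕ) : Type :=
  {n : ℕ → ℕ //
    (∀ i j : ℕ, i < j → j < L → n j < n i) ∧ (∀ i, i < L → 0 < n i) ∧ ∀ i, L ≤ i → n i = 0}

/-- `Lpart m l i = l₁ + ⋯ + l_{i-1}` (0-indexed: the sum of the `l j` for `j < i`),
i.e. the flat index of the first entry of the `i`-th block. -/
def Lpart (m : ℕ) (l : Fin m → ℕ) (i : Fin m) : ℕ :=
  ∑ j : Fin m, if j < i then l j else 0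

/-- The bracket series
`[{(n-aᵢ)^{kᵢ}, lᵢ}ᵢ; λ] = Σ_{n₁ > ⋯ > n_{L_m} > 0}
  ∏ᵢ [ 1/(n_{L_{i-1}+1} - aᵢ)^{kᵢ} ∏_j 1/(n_j - λ) ]`;
the bracket with all shifts `aᵢ = 0` is the generating function `f({kᵢ,lᵢ}ᵢ; λ)`. -/
noncomputable def brak (m : ℕ) (a k l : Fin m → ℕ) (lam : ℂ) : ℂ :=
  ∑' n : DecSeq (∑ j, l j),
    ∏ i : Fin m,
      (1 / ((n.1 (Lpart m l i) : ℂ) - (a i : ℂ)) ^ k i *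
        ∏ j ∈ Finset.Ico (Lpart m l i) (Lpart m l i + l i), 1 / ((n.1 j : ℂ) - lam))


namespace BrakAux

open Finset


open Finset

lemma Lpart_zero (m : ℕ) (l : Fin m → ℕ) (i : Fin m) (hi : i.1 = 0) : Lpart m l i = 0 := by
  rw [Lpart]
  apply Finset.sum_eq_zero
  intro j _
  rw [if_neg]
  rw [Fin.lt_def, hi]
  omega

lemma Lpart_mono (m : ℕ) (l : Fin m → ℕ) {i i' : Fin m} (h : i ≤ i') :
    Lpart m l i ≤ Lpart m l i' := by
  apply Finset.sum_le_sum
  intro j _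
  split_ifs with h1 h2
  · exact le_rfl
  · exact absurd (lt_of_lt_of_le h1 h) h2
  · exact Nat.zero_le _
  · exact le_rfl

lemma Lpart_succ (m : ℕ) (l : Fin m → ℕ) (i : Fin m) :
    Lpart m l i + l i = ∑ j : Fin m, if j ≤ i then l j else 0 := by
  have key : ∀ j : Fin m, (if j ≤ i then l j else 0)
      = (if j < i then l j else 0) + (if j = i then l j else 0) := by
    intro j
    rcases eq_or_ne j i with rfl | h
    · simp
    · by_cases h2 : j < i
      · simp [h, h2, le_of_lt h2]
      · have h3 : ¬ j ≤ i := fun hle => h2 (lt_of_le_of_ne hle h)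
        simp [h, h2, h3]
  rw [Finset.sum_congr rfl fun j _ => key j, Finset.sum_add_distrib,
    Finset.sum_ite_eq' Finset.univ i l]
  simp [Lpart]

lemma Lpart_add_le (m : ℕ) (l : Fin m → ℕ) (i : Fin m) :
    Lpart m l i + l i ≤ ∑ j, l j := by
  rw [Lpart_succ]
  apply Finset.sum_le_sum
  intro j _
  split <;> simp

lemma Lpart_add_le' (m : ℕ) (l : Fin m → ℕ) {i i' : Fin m} (h : i < i') :
    Lpart m l i + l i ≤ Lpart m l i' := by
  rw [Lpart_succ, Lpart]
  apply Finset.sum_le_sum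
  intro j _
  split_ifs with h1 h2
  · exact le_rfl
  · exact absurd (lt_of_le_of_lt h1 h) h2
  · exact Nat.zero_le _
  · exact le_rfl

lemma Lpart_last_add (m : ℕ) (hm : 0 < m) (l : Fin m → ℕ) :
    Lpart m l ⟨m - 1, by omega⟩ + l ⟨m - 1, by omega⟩ = ∑ j, l j := by
  rw [Lpart_succ]
  apply Finset.sum_congr rfl
  intro j _
  rw [if_pos]
  rw [Fin.le_def]
  have := j.2
  simp only
  omega

lemma prod_blocks {M : Type*} [CommMonoid M] :
    ∀ (m : ℕ) (l : Fin m → ℕ) (f : ℕ → M),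
      (∏ i : Fin m, ∏ j ∈ Finset.Ico (Lpart m l i) (Lpart m l i + l i), f j)
        = ∏ j ∈ Finset.range (∑ j, l j), f j := by
  intro m
  induction m with
  | zero => intro l f; simp
  | succ m ih =>
    intro l f
    have hcast : ∀ i : Fin m, Lpart (m + 1) l i.castSucc
        = Lpart m (fun j => l j.castSucc) i := by
      intro i
      rw [Lpart, Lpart, Fin.sum_univ_castSucc]
      have h1 : ¬ (Fin.last m < i.castSucc) := by
        rw [Fin.lt_def]
        simp only [Fin.val_last, Fin.coe_castSucc]
        omega
      rw [if_neg h1, add_zero]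
      apply Finset.sum_congr rfl
      intro j _
      exact if_congr Fin.castSucc_lt_castSucc_iff rfl rfl
    have hlast : Lpart (m + 1) l (Fin.last m) = ∑ j : Fin m, l j.castSucc := by
      rw [Lpart, Fin.sum_univ_castSucc]
      simp [Fin.castSucc_lt_last]
    rw [Fin.prod_univ_castSucc]
    have hmain : (∏ i : Fin m,
        ∏ j ∈ Finset.Ico (Lpart (m+1) l i.castSucc) (Lpart (m+1) l i.castSucc + l i.castSucc), f j)
        = ∏ j ∈ Finset.range (∑ j : Fin m, l j.castSucc), f j := by
      rw [← ih (fun j => l j.castSucc) f]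
      apply Finset.prod_congr rfl
      intro i _
      rw [hcast]
    rw [hmain, hlast]
    rw [Fin.sum_univ_castSucc (f := l), Finset.prod_range_add,
      Finset.prod_Ico_eq_prod_range, Nat.add_sub_cancel_left]



lemma decseq_anti {L : ℕ} (n : DecSeq L) {i j : ℕ} (h : i ≤ j) (hj : j < L) :
    n.1 j ≤ n.1 i := by
  rcases eq_or_lt_of_le h with rfl | h'
  · exact le_rfl
  · exact le_of_lt (n.2.1 i j h' hj)

lemma decseq_two_le {L : ℕ} (n : DecSeq L) {p : ℕ} (hp : p + 1 < L) : 2 ≤ n.1 p := by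
  have h1 := n.2.1 p (p + 1) (Nat.lt_succ_self p) hp
  have h2 := n.2.2.1 (p + 1) hp
  omega

lemma exists_bound (lam : ℂ) (h : ∀ n : ℕ, 0 < n → lam ≠ (n : ℂ)) :
    ∃ C : ℝ, 1 ≤ C ∧ ∀ t : ℕ, 1 ≤ t → (t : ℝ) ≤ C * ‖(t : ℂ) - lam‖ := by
  set T : ℕ := ⌈2 * ‖lam‖⌉₊ + 2 with hT
  have hne : (Finset.Ico 1 T).Nonempty := ⟨1, by simp [hT]⟩
  set δ : ℝ := (Finset.Ico 1 T).inf' hne (fun t => ‖(t : ℂ) - lam‖) with hδ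
  have hδpos : 0 < δ := by
    rw [hδ, Finset.lt_inf'_iff]
    intro t ht
    rw [Finset.mem_Ico] at ht
    have hne2 : (t : ℂ) - lam ≠ 0 := by
      rw [sub_ne_zero]
      exact fun he => h t (by omega) he.symm
    simpa using norm_pos_iff.mpr hne2
  refine ⟨max ((T : ℝ) / δ) 2, le_trans (by norm_num) (le_max_right _ _), ?_⟩
  intro t ht
  have hnn : (0:ℝ) ≤ ‖(t : ℂ) - lam‖ := norm_nonneg _
  by_cases hcase : t < T
  · have hmem : t ∈ Finset.Ico 1 T := Finset.mem_Ico.mpr ⟨ht, hcase⟩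
    have hδle : δ ≤ ‖(t : ℂ) - lam‖ := Finset.inf'_le _ hmem
    have h1 : (t : ℝ) ≤ (T : ℝ) := by exact_mod_cast le_of_lt hcase
    have h2 : (T : ℝ) = ((T : ℝ) / δ) * δ := by field_simp
    calc (t : ℝ) ≤ (T : ℝ) := h1
      _ = ((T : ℝ) / δ) * δ := h2
      _ ≤ max ((T : ℝ) / δ) 2 * ‖(t : ℂ) - lam‖ := by
          apply mul_le_mul (le_max_left _ _) hδle (le_of_lt hδpos)
          exact le_trans (by norm_num) (le_max_right _ _)
  · push_neg at hcase
    have h1 : 2 * ‖lam‖ ≤ (T : ℝ) := by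
      rw [hT]
      push_cast
      have := Nat.le_ceil (2 * ‖lam‖)
      linarith
    have h2 : (T : ℝ) ≤ (t : ℝ) := by exact_mod_cast hcase
    have h3 : (t : ℝ) - ‖lam‖ ≤ ‖(t : ℂ) - lam‖ := by
      have := norm_sub_norm_le ((t : ℂ)) lam
      rwa [Complex.norm_natCast] at this
    calc (t : ℝ) ≤ 2 * ((t : ℝ) - ‖lam‖) := by linarith
      _ ≤ 2 * ‖(t : ℂ) - lam‖ := by linarith
      _ ≤ max ((T : ℝ) / δ) 2 * ‖(t : ℂ) - lam‖ :=
          mul_le_mul_of_nonneg_right (le_max_right _ _) hnn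

lemma summable_pi_prod {g : ℕ → ℝ} (h0 : ∀ t, 0 ≤ g t) (hs : Summable g) :
    ∀ N : ℕ, Summable (fun v : Fin N → ℕ => ∏ j, g (v j)) := by
  intro N
  induction N with
  | zero =>
    have : Finite (Fin 0 → ℕ) := @Finite.of_subsingleton _ inferInstance
    exact Summable.of_finite
  | succ N ih =>
    have key : Summable (fun p : ℕ × (Fin N → ℕ) => g p.1 * ∏ j, g (p.2 j)) := by
      apply hs.mul_of_nonneg ih
      · exact h0
      · exact fun v => Finset.prod_nonneg fun j _ => h0 _
    have he := (Fin.consEquiv (fun _ : Fin (N + 1) => ℕ)).summable_iff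
      (f := fun v : Fin (N + 1) → ℕ => ∏ j, g (v j))
    rw [← he]
    have : ((fun v : Fin (N + 1) → ℕ => ∏ j, g (v j)) ∘
        (Fin.consEquiv (fun _ : Fin (N + 1) => ℕ)))
        = fun p : ℕ × (Fin N → ℕ) => g p.1 * ∏ j, g (p.2 j) := by
      funext p
      simp only [Function.comp_apply, Fin.consEquiv_apply]
      rw [Fin.prod_univ_succ]
      simp
    rw [this]
    exact key



lemma inv_le_of_le_mul {a b c : ℝ} (ha : 0 < a) (hc : 0 < c) (h : a ≤ b * c) :
    c⁻¹ ≤ b * a⁻¹ := by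
  rw [← one_div, show b * a⁻¹ = b / a from (div_eq_mul_inv b a).symm,
    div_le_div_iff₀ hc ha, one_mul]
  linarith

lemma summable_F (m : ℕ) (hm : 1 ≤ m) (k l : Fin m → ℕ) (hk : ∀ i, 1 ≤ k i)
    (hl : ∀ i, 1 ≤ l i) (lam : ℂ) (hlam : ∀ n : ℕ, 0 < n → lam ≠ (n : ℂ))
    (L : ℕ) (hL : ∑ j, l j = L) (hlt : ∀ i, Lpart m l i + 1 < L) :
    Summable (fun n : DecSeq L => ∏ i : Fin m,
      (1 / ((n.1 (Lpart m l i) : ℂ) - 1) ^ k i *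
        ∏ j ∈ Finset.Ico (Lpart m l i) (Lpart m l i + l i), 1 / ((n.1 j : ℂ) - lam))) := by
  classical
  obtain ⟨C, hC1, hC⟩ := exists_bound lam hlam
  have hC0 : (0:ℝ) < C := lt_of_lt_of_le one_pos hC1
  have hLpos : 0 < L := by have := hlt ⟨0, by omega⟩; omega
  set s : ℝ := 1 + (L : ℝ)⁻¹ with hs
  have hs1 : 1 < s := by
    rw [hs]
    have h0 : (0:ℝ) < (L : ℝ)⁻¹ := by positivity
    linarith
  set g : ℕ → ℝ := fun t => ((t : ℝ) ^ s)⁻¹ with hg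
  have hg0 : ∀ t, 0 ≤ g t := fun t => inv_nonneg.2 (Real.rpow_nonneg (Nat.cast_nonneg t) s)
  have hgs : Summable g := Real.summable_nat_rpow_inv.2 hs1
  have hM : Summable (fun v : Fin L → ℕ => ∏ j, g (v j)) := summable_pi_prod hg0 hgs L
  have hinj : Function.Injective (fun n : DecSeq L => fun j : Fin L => n.1 j) := by
    intro a b hab
    apply Subtype.ext
    funext j
    by_cases hj : j < L
    · exact congrFun hab ⟨j, hj⟩
    · rw [a.2.2.2 j (le_of_not_gt hj), b.2.2.2 j (le_of_not_gt hj)]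
  have hres : Summable (fun n : DecSeq L => 2 * C ^ L * ∏ j : Fin L, g (n.1 j)) :=
    (hM.comp_injective hinj).mul_left _
  apply Summable.of_norm_bounded hres
  intro n
  have hble : ∀ i : Fin m, Lpart m l i + l i ≤ L := fun i => hL ▸ Lpart_add_le m l i
  have hpos : ∀ j, j < L → 1 ≤ n.1 j := fun j hj => n.2.2.1 j hj
  set i0 : Fin m := ⟨0, by omega⟩ with hi0
  have hp0 : Lpart m l i0 = 0 := Lpart_zero m l i0 rfl
  have hn0 : 2 ≤ n.1 0 := decseq_two_le n (by have := hlt i0; rw [hp0] at this; omega)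
  have key1 : ‖∏ i : Fin m, (1 / ((n.1 (Lpart m l i) : ℂ) - 1) ^ k i *
        ∏ j ∈ Finset.Ico (Lpart m l i) (Lpart m l i + l i), 1 / ((n.1 j : ℂ) - lam))‖
      ≤ ∏ i : Fin m, ((if i = i0 then 2 * ((n.1 0 : ℝ))⁻¹ else 1) *
        ∏ j ∈ Finset.Ico (Lpart m l i) (Lpart m l i + l i), (C * ((n.1 j : ℝ))⁻¹)) := by
    rw [norm_prod]
    apply Finset.prod_le_prod (fun i _ => norm_nonneg _)
    intro i _
    rw [norm_mul, norm_prod]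
    apply mul_le_mul
    · have h2 : 2 ≤ n.1 (Lpart m l i) := decseq_two_le n (hlt i)
      have hcast : ((n.1 (Lpart m l i) : ℂ) - 1) = ((n.1 (Lpart m l i) - 1 : ℕ) : ℂ) := by
        push_cast [Nat.cast_sub (by omega : 1 ≤ n.1 (Lpart m l i))]
        ring
      have hnorm : ‖1 / ((n.1 (Lpart m l i) : ℂ) - 1) ^ k i‖
          = (((n.1 (Lpart m l i) - 1 : ℕ) : ℝ))⁻¹ ^ k i := by
        rw [hcast, one_div, norm_inv, norm_pow, Complex.norm_natCast, inv_pow]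
      rw [hnorm]
      have hone : (1:ℝ) ≤ ((n.1 (Lpart m l i) - 1 : ℕ) : ℝ) := by
        exact_mod_cast (by omega : 1 ≤ n.1 (Lpart m l i) - 1)
      have hbase : (((n.1 (Lpart m l i) - 1 : ℕ) : ℝ))⁻¹ ≤ 1 := by
        rw [inv_le_one_iff₀]
        right
        exact hone
      have hbase0 : (0:ℝ) ≤ (((n.1 (Lpart m l i) - 1 : ℕ) : ℝ))⁻¹ := by positivity
      by_cases hii : i = i0
      · rw [if_pos hii]
        have hpk : (((n.1 (Lpart m l i) - 1 : ℕ) : ℝ))⁻¹ ^ k i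
            ≤ (((n.1 (Lpart m l i) - 1 : ℕ) : ℝ))⁻¹ := by
          calc (((n.1 (Lpart m l i) - 1 : ℕ) : ℝ))⁻¹ ^ k i
              ≤ (((n.1 (Lpart m l i) - 1 : ℕ) : ℝ))⁻¹ ^ 1 :=
                pow_le_pow_of_le_one hbase0 hbase (hk i)
            _ = _ := pow_one _
        apply le_trans hpk
        rw [hii, hp0]
        have h2n : (2:ℝ) ≤ (n.1 0 : ℝ) := by exact_mod_cast hn0
        have hcast2 : ((n.1 0 - 1 : ℕ) : ℝ) = (n.1 0 : ℝ) - 1 := by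
          push_cast [Nat.cast_sub (by omega : 1 ≤ n.1 0)]
          ring
        rw [hcast2]
        exact inv_le_of_le_mul (by linarith) (by linarith)
          (by linarith : (n.1 0 : ℝ) ≤ 2 * ((n.1 0 : ℝ) - 1))
      · rw [if_neg hii]
        exact pow_le_one₀ hbase0 hbase
    · apply Finset.prod_le_prod (fun j _ => norm_nonneg _)
      intro j hj
      rw [Finset.mem_Ico] at hj
      have hjL : j < L := lt_of_lt_of_le hj.2 (hble i)
      have h1 : 1 ≤ n.1 j := hpos j hjL
      have h1' : (1:ℝ) ≤ (n.1 j : ℝ) := by exact_mod_cast h1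
      have hCb := hC (n.1 j) h1
      have hw0 : (0:ℝ) < ‖(n.1 j : ℂ) - lam‖ := by nlinarith
      rw [one_div, norm_inv]
      exact inv_le_of_le_mul (by linarith) hw0 hCb
    · exact Finset.prod_nonneg fun j _ => norm_nonneg _
    · positivity
  have key2 : (∏ i : Fin m, ((if i = i0 then 2 * ((n.1 0 : ℝ))⁻¹ else 1) *
        ∏ j ∈ Finset.Ico (Lpart m l i) (Lpart m l i + l i), (C * ((n.1 j : ℝ))⁻¹)))
      = (2 * ((n.1 0 : ℝ))⁻¹) *
        (C ^ L * ∏ j ∈ Finset.range L, ((n.1 j : ℝ))⁻¹) := by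
    rw [Finset.prod_mul_distrib]
    congr 1
    · rw [Finset.prod_ite_eq' Finset.univ i0 (fun _ => 2 * ((n.1 0 : ℝ))⁻¹)]
      simp
    · rw [prod_blocks m l (fun j => C * ((n.1 j : ℝ))⁻¹), hL, Finset.prod_mul_distrib,
        Finset.prod_const, Finset.card_range]
  have key3 : (2 * ((n.1 0 : ℝ))⁻¹) *
        (C ^ L * ∏ j ∈ Finset.range L, ((n.1 j : ℝ))⁻¹)
      ≤ 2 * C ^ L * ∏ j : Fin L, g (n.1 j) := by
    rw [show (∏ j : Fin L, g (n.1 j)) = ∏ j ∈ Finset.range L, g (n.1 j) from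
      Fin.prod_univ_eq_prod_range (fun j => g (n.1 j)) L]
    have hsplitg : ∀ j ∈ Finset.range L, g (n.1 j)
        = ((n.1 j : ℝ))⁻¹ * (((n.1 j : ℝ)) ^ ((L : ℝ))⁻¹)⁻¹ := by
      intro j hj
      have h1 : (0:ℝ) < (n.1 j : ℝ) := by
        exact_mod_cast hpos j (Finset.mem_range.1 hj)
      rw [hg]
      simp only
      rw [hs, Real.rpow_add h1, Real.rpow_one, mul_inv]
    rw [Finset.prod_congr rfl hsplitg, Finset.prod_mul_distrib]
    have hPnn : (0:ℝ) ≤ ∏ j ∈ Finset.range L, ((n.1 j : ℝ))⁻¹ :=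
      Finset.prod_nonneg fun j _ => by positivity
    have hmain : ((n.1 0 : ℝ))⁻¹
        ≤ ∏ j ∈ Finset.range L, (((n.1 j : ℝ)) ^ ((L : ℝ))⁻¹)⁻¹ := by
      rw [Finset.prod_inv_distrib]
      have hp0' : (0:ℝ) < ∏ j ∈ Finset.range L, ((n.1 j : ℝ)) ^ ((L : ℝ))⁻¹ := by
        apply Finset.prod_pos
        intro j hj
        have h1 : (0:ℝ) < (n.1 j : ℝ) := by
          exact_mod_cast hpos j (Finset.mem_range.1 hj)
        positivity
      have hprodle : ∏ j ∈ Finset.range L, ((n.1 j : ℝ)) ^ ((L : ℝ))⁻¹ ≤ (n.1 0 : ℝ) := by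
        calc ∏ j ∈ Finset.range L, ((n.1 j : ℝ)) ^ ((L : ℝ))⁻¹
            ≤ ∏ _j ∈ Finset.range L, ((n.1 0 : ℝ)) ^ ((L : ℝ))⁻¹ := by
              apply Finset.prod_le_prod
              · intro j hj; positivity
              · intro j hj
                apply Real.rpow_le_rpow (by positivity) _ (by positivity)
                exact_mod_cast decseq_anti n (Nat.zero_le j) (Finset.mem_range.1 hj)
          _ = (((n.1 0 : ℝ)) ^ ((L : ℝ))⁻¹) ^ L := by
              rw [Finset.prod_const, Finset.card_range]
          _ = (n.1 0 : ℝ) := by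
              rw [← Real.rpow_natCast (((n.1 0 : ℝ)) ^ ((L : ℝ))⁻¹) L,
                ← Real.rpow_mul (by positivity),
                inv_mul_cancel₀ (by exact_mod_cast hLpos.ne' : ((L : ℝ)) ≠ 0),
                Real.rpow_one]
      exact inv_anti₀ hp0' hprodle
    calc 2 * ((n.1 0 : ℝ))⁻¹ * (C ^ L * ∏ j ∈ Finset.range L, ((n.1 j : ℝ))⁻¹)
        = 2 * C ^ L * ((∏ j ∈ Finset.range L, ((n.1 j : ℝ))⁻¹) * ((n.1 0 : ℝ))⁻¹) := by
          ring
      _ ≤ 2 * C ^ L * ((∏ j ∈ Finset.range L, ((n.1 j : ℝ))⁻¹)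
            * ∏ j ∈ Finset.range L, (((n.1 j : ℝ)) ^ ((L : ℝ))⁻¹)⁻¹) := by
          apply mul_le_mul_of_nonneg_left _ (by positivity)
          exact mul_le_mul_of_nonneg_left hmain hPnn
  calc ‖∏ i : Fin m, (1 / ((n.1 (Lpart m l i) : ℂ) - 1) ^ k i *
        ∏ j ∈ Finset.Ico (Lpart m l i) (Lpart m l i + l i), 1 / ((n.1 j : ℂ) - lam))‖
      ≤ ∏ i : Fin m, ((if i = i0 then 2 * ((n.1 0 : ℝ))⁻¹ else 1) *
        ∏ j ∈ Finset.Ico (Lpart m l i) (Lpart m l i + l i), (C * ((n.1 j : ℝ))⁻¹)) := key1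
    _ = _ := key2
    _ ≤ _ := key3


/-- The summand of `brak`, as a function of a raw sequence. -/
noncomputable def term (m : ℕ) (a k l : Fin m → ℕ) (lam : ℂ) (v : ℕ → ℕ) : ℂ :=
  ∏ i : Fin m,
    (1 / ((v (Lpart m l i) : ℂ) - (a i : ℂ)) ^ k i *
      ∏ j ∈ Finset.Ico (Lpart m l i) (Lpart m l i + l i), 1 / ((v j : ℂ) - lam))

lemma brak_eq_tsum_term (m : ℕ) (a k l : Fin m → ℕ) (lam : ℂ) :
    brak m a k l lam = ∑' n : DecSeq (∑ j, l j), term m a k l lam n.1 := rfl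

lemma term_one (m : ℕ) (k l : Fin m → ℕ) (lam : ℂ) (v : ℕ → ℕ) :
    term m (fun _ => 1) k l lam v = ∏ i : Fin m,
      (1 / ((v (Lpart m l i) : ℂ) - 1) ^ k i *
        ∏ j ∈ Finset.Ico (Lpart m l i) (Lpart m l i + l i), 1 / ((v j : ℂ) - lam)) := by
  simp [term]

lemma term_zero (m : ℕ) (k l : Fin m → ℕ) (lam : ℂ) (v : ℕ → ℕ) :
    term m (fun _ => 0) k l lam v = ∏ i : Fin m,
      (1 / ((v (Lpart m l i) : ℂ)) ^ k i *
        ∏ j ∈ Finset.Ico (Lpart m l i) (Lpart m l i + l i), 1 / ((v j : ℂ) - lam)) := by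
  simp [term]

lemma tsum_decseq_congr {L1 L2 : ℕ} (h : L1 = L2) (f : (ℕ → ℕ) → ℂ) :
    ∑' n : DecSeq L1, f n.1 = ∑' n : DecSeq L2, f n.1 := by subst h; rfl

/-- The shift-by-one equivalence onto sequences whose last entry is at least `2`. -/
def eqA (L L' : ℕ) (h : L = L' + 1) :
    DecSeq L ≃ ↑({x : DecSeq L | x.1 L' = 1}ᶜ) where
  toFun n := ⟨⟨fun j => if j < L then n.1 j + 1 else 0,
      fun i j hij hj => by
        dsimp only
        rw [if_pos hj, if_pos (lt_trans hij hj)]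
        exact Nat.add_lt_add_right (n.2.1 i j hij hj) 1,
      fun i hi => by dsimp only; rw [if_pos hi]; omega,
      fun i hi => by dsimp only; rw [if_neg (by omega)]⟩, by
    show ¬ ((if L' < L then n.1 L' + 1 else 0) = 1)
    intro hmem
    rw [if_pos (by omega : L' < L)] at hmem
    have := n.2.2.1 L' (by omega)
    omega⟩
  invFun x := ⟨fun j => x.1.1 j - 1,
    fun i j hij hj => by
      dsimp only
      have h1 := x.1.2.1 i j hij hj
      have h2 := x.1.2.2.1 j hj
      omega,
    fun i hi => by
      dsimp only
      have hne : x.1.1 L' ≠ 1 := x.2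
      have hpos := x.1.2.2.1 L' (by omega)
      have hle : x.1.1 L' ≤ x.1.1 i := decseq_anti x.1 (by omega) (by omega)
      omega,
    fun i hi => by dsimp only; rw [x.1.2.2.2 i hi]⟩
  left_inv n := by
    apply Subtype.ext
    funext j
    dsimp only
    by_cases hj : j < L
    · rw [if_pos hj]; omega
    · rw [if_neg hj, n.2.2.2 j (le_of_not_gt hj)]

  right_inv x := by
    apply Subtype.ext
    apply Subtype.ext
    funext j
    dsimp only
    by_cases hj : j < L
    · rw [if_pos hj]
      have := x.1.2.2.1 j hj
      omega
    · rw [if_neg hj, x.1.2.2.2 j (le_of_not_gt hj)]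

lemma eqA_apply (L L' : ℕ) (h : L = L' + 1) (n : DecSeq L) (j : ℕ) :
    ((eqA L L' h) n).1.1 j = if j < L then n.1 j + 1 else 0 := rfl

/-- The shift-by-one-and-append-one equivalence onto sequences whose last entry is `1`. -/
def eqB (L L' : ℕ) (h : L = L' + 1) :
    DecSeq L' ≃ ↑{x : DecSeq L | x.1 L' = 1} where
  toFun n := ⟨⟨fun j => if j < L' then n.1 j + 1 else if j = L' then 1 else 0,
      fun i j hij hj => by
        dsimp only
        by_cases hj' : j < L'
        · rw [if_pos hj', if_pos (lt_trans hij hj')]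
          exact Nat.add_lt_add_right (n.2.1 i j hij hj') 1
        · have hjeq : j = L' := by omega
          have hiL : i < L' := by omega
          rw [if_neg hj', if_pos hjeq, if_pos hiL]
          have := n.2.2.1 i hiL
          omega,
      fun i hi => by
        dsimp only
        by_cases hi' : i < L'
        · rw [if_pos hi']; omega
        · have hieq : i = L' := by omega
          rw [if_neg hi', if_pos hieq]; omega,
      fun i hi => by dsimp only; rw [if_neg (by omega), if_neg (by omega)]⟩, by
    show (fun j => if j < L' then n.1 j + 1 else if j = L' then 1 else 0) L' = 1
    simp⟩
  invFun x := ⟨fun j => if j < L' then x.1.1 j - 1 else 0,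
    fun i j hij hj => by
      dsimp only
      rw [if_pos hj, if_pos (lt_trans hij hj)]
      have h1 := x.1.2.1 i j hij (by omega)
      have h2 := x.1.2.2.1 j (by omega)
      omega,
    fun i hi => by
      dsimp only
      rw [if_pos hi]
      have hS1 : x.1.1 L' = 1 := x.2
      have := x.1.2.1 i L' hi (by omega)
      omega,
    fun i hi => by dsimp only; rw [if_neg (by omega)]⟩
  left_inv n := by
    apply Subtype.ext
    funext j
    dsimp only
    by_cases hj : j < L'
    · rw [if_pos hj, if_pos hj]; omega
    · rw [if_neg hj, n.2.2.2 j (le_of_not_gt hj)]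
  right_inv x := by
    apply Subtype.ext
    apply Subtype.ext
    funext j
    dsimp only
    by_cases hj : j < L'
    · rw [if_pos hj, if_pos hj]
      have := x.1.2.2.1 j (by omega)
      omega
    · rw [if_neg hj]
      by_cases hj2 : j = L'
      · rw [if_pos hj2, hj2]
        exact (show x.1.1 L' = 1 from x.2).symm
      · rw [if_neg hj2, x.1.2.2.2 j (by omega)]

lemma eqB_apply (L L' : ℕ) (h : L = L' + 1) (n : DecSeq L') (j : ℕ) :
    ((eqB L L' h) n).1.1 j = if j < L' then n.1 j + 1 else if j = L' then 1 else 0 := rfl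

end BrakAux

open BrakAux in
/-- Lemma (iii)(d): for `l_m ≥ 2`, with every block shifted by `(n-1)` on the left
(evaluated at `λ`) and all blocks unshifted on the right (evaluated at `λ' = λ - 1`),
`[{(n-1)^{k₁},l₁,…,(n-1)^{k_m},l_m};λ]
  = [{n^{k₁},l₁,…,n^{k_m},l_m};λ'] - (1/λ')[{n^{k₁},l₁,…,n^{k_m},l_m-1};λ']`. -/
theorem bracket_lemma_iiid (m : ℕ) (hm : 1 ≤ m) (k l : Fin m → ℕ)
    (hk : ∀ i, 1 ≤ k i) (hl : ∀ i, 1 ≤ l i) (hlm : 2 ≤ l ⟨m - 1, by omega⟩)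
    (lam : ℂ) (hlam : ∀ n : ℕ, 0 < n → lam ≠ (n : ℂ)) :
    brak m (fun _ => 1) k l lam
      = brak m (fun _ => 0) k l (lam - 1)
        - (1 / (lam - 1)) *
            brak m (fun _ => 0) k (fun j => if j.1 = m - 1 then l j - 1 else l j) (lam - 1) := by
  classical
  set l' : Fin m → ℕ := fun j => if j.1 = m - 1 then l j - 1 else l j with hl'def
  obtain ⟨L, hL⟩ : ∃ x, ∑ j, l j = x := ⟨_, rfl⟩
  obtain ⟨L', hL'⟩ : ∃ x, ∑ j, l' j = x := ⟨_, rfl⟩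
  have hmpos : 0 < m := hm
  set last : Fin m := ⟨m - 1, by omega⟩ with hlastdef
  have hllast : 2 ≤ l last := hlm
  have hl'i : ∀ i : Fin m, i ≠ last → l' i = l i := by
    intro i hi
    rw [hl'def]
    dsimp only
    rw [if_neg]
    intro hcon
    exact hi (Fin.ext (by rw [hlastdef]; exact hcon))
  have hl'last : l' last + 1 = l last := by
    rw [hl'def]
    dsimp only
    rw [if_pos rfl]
    omega
  have hLL' : L = L' + 1 := by
    rw [← hL, ← hL']
    have hzero : ∀ j : Fin m, l j = l' j + (if j = last then 1 else 0) := by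
      intro j
      by_cases hj : j = last
      · rw [if_pos hj, hj]; omega
      · rw [if_neg hj, hl'i j hj]; omega
    rw [Finset.sum_congr rfl fun j _ => hzero j, Finset.sum_add_distrib,
      Finset.sum_ite_eq' Finset.univ last (fun _ => 1)]
    simp
  have hpp : ∀ i : Fin m, Lpart m l' i = Lpart m l i := by
    intro i
    apply Finset.sum_congr rfl
    intro j _
    by_cases hj : j < i
    · have hjne : j ≠ last := by
        intro hcon
        rw [Fin.lt_def] at hj
        have h2 := i.2
        rw [hcon, hlastdef] at hj
        simp only at hj
        omega
      rw [if_pos hj, if_pos hj, hl'i j hjne]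
    · rw [if_neg hj, if_neg hj]
  have hble : ∀ i, Lpart m l i + l i ≤ L := fun i => hL ▸ Lpart_add_le m l i
  have hlastadd : Lpart m l last + l last = L := by rw [← hL]; exact Lpart_last_add m hmpos l
  have hmono : ∀ i, Lpart m l i ≤ Lpart m l last := by
    intro i
    apply Lpart_mono
    rw [Fin.le_def, hlastdef]
    have := i.2
    simp only
    omega
  have hlt : ∀ i, Lpart m l i + 1 < L := by
    intro i
    have h1 := hmono i
    omega
  have hplastL' : Lpart m l last + l' last = L' := by omega
  have hplastlt : Lpart m l last < L' := by omega
  have hbleL' : ∀ i, i ≠ last → Lpart m l i + l i ≤ Lpart m l last := by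
    intro i hi
    apply Lpart_add_le'
    rw [Fin.lt_def, hlastdef]
    have h2 := i.2
    have h3 : i.1 ≠ m - 1 := by
      intro hc
      exact hi (Fin.ext (by rw [hlastdef]; exact hc))
    simp only
    omega
  -- rewrite the three brackets
  have hb1 : brak m (fun _ => 1) k l lam
      = ∑' n : DecSeq L, term m (fun _ => 1) k l lam n.1 := by
    rw [brak_eq_tsum_term, tsum_decseq_congr hL]
  have hb2 : brak m (fun _ => 0) k l (lam - 1)
      = ∑' n : DecSeq L, term m (fun _ => 0) k l (lam - 1) n.1 := by
    rw [brak_eq_tsum_term, tsum_decseq_congr hL]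
  have hb3 : brak m (fun _ => 0) k l' (lam - 1)
      = ∑' n : DecSeq L', term m (fun _ => 0) k l' (lam - 1) n.1 := by
    rw [brak_eq_tsum_term, tsum_decseq_congr hL']
  -- summability of the left-hand side term
  have hsom : Summable (fun n : DecSeq L => term m (fun _ => 1) k l lam n.1) := by
    simp only [term_one]
    exact summable_F m hm k l hk hl lam hlam L hL hlt
  have hsplit := Summable.tsum_add_tsum_compl (s := {x : DecSeq L | x.1 L' = 1})
    (hsom.subtype _) (hsom.subtype _)
  -- the complement part
  have hA : ∑' x : ↑({x : DecSeq L | x.1 L' = 1}ᶜ), term m (fun _ => 1) k l lam x.1.1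
      = ∑' n : DecSeq L, term m (fun _ => 0) k l (lam - 1) n.1 := by
    rw [← Equiv.tsum_eq (eqA L L' hLL')
      (fun x : ↑({x : DecSeq L | x.1 L' = 1}ᶜ) => term m (fun _ => 1) k l lam x.1.1)]
    apply tsum_congr
    intro n
    simp only [term_one, term_zero, eqA_apply]
    apply Finset.prod_congr rfl
    intro i _
    have h1 : Lpart m l i < L := by have := hlt i; omega
    rw [if_pos h1]
    congr 1
    · rw [show ((n.1 (Lpart m l i) + 1 : ℕ) : ℂ) - 1 = ((n.1 (Lpart m l i) : ℕ) : ℂ) from by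
        push_cast; ring]
    · apply Finset.prod_congr rfl
      intro j hj
      have hjL : j < L := lt_of_lt_of_le (Finset.mem_Ico.1 hj).2 (hble i)
      rw [if_pos hjL, show ((n.1 j + 1 : ℕ) : ℂ) - lam = ((n.1 j : ℕ) : ℂ) - (lam - 1) from by
        push_cast; ring]
  -- the set part
  have hB : ∑' x : ↑{x : DecSeq L | x.1 L' = 1}, term m (fun _ => 1) k l lam x.1.1
      = (1 / (1 - lam)) * ∑' n : DecSeq L', term m (fun _ => 0) k l' (lam - 1) n.1 := by
    rw [← Equiv.tsum_eq (eqB L L' hLL')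
      (fun x : ↑{x : DecSeq L | x.1 L' = 1} => term m (fun _ => 1) k l lam x.1.1),
      ← tsum_mul_left]
    apply tsum_congr
    intro n
    simp only [term_one, term_zero, eqB_apply, hpp]
    have key : ∀ i : Fin m,
        1 / ((((if Lpart m l i < L' then n.1 (Lpart m l i) + 1
              else if Lpart m l i = L' then 1 else 0 : ℕ)) : ℂ) - 1) ^ k i *
          ∏ j ∈ Finset.Ico (Lpart m l i) (Lpart m l i + l i),
            1 / (((if j < L' then n.1 j + 1 else if j = L' then 1 else 0 : ℕ) : ℂ) - lam)
        = (1 / ((n.1 (Lpart m l i) : ℂ)) ^ k i *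
            ∏ j ∈ Finset.Ico (Lpart m l i) (Lpart m l i + l' i),
              1 / ((n.1 j : ℂ) - (lam - 1))) * (if i = last then 1 / (1 - lam) else 1) := by
      intro i
      by_cases hi : i = last
      · subst hi
        rw [if_pos rfl, if_pos hplastlt]
        rw [show Lpart m l last + l last = L' + 1 from by omega]
        rw [Finset.prod_Ico_succ_top (by omega : Lpart m l last ≤ L')]
        rw [if_neg (lt_irrefl L'), if_pos rfl]
        rw [show Lpart m l last + l' last = L' from hplastL']
        have hprodeq : ∏ j ∈ Finset.Ico (Lpart m l last) L',
              1 / (((if j < L' then n.1 j + 1 else if j = L' then 1 else 0 : ℕ) : ℂ) - lam)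
            = ∏ j ∈ Finset.Ico (Lpart m l last) L', 1 / ((n.1 j : ℂ) - (lam - 1)) := by
          apply Finset.prod_congr rfl
          intro j hj
          have hjlt : j < L' := (Finset.mem_Ico.1 hj).2
          rw [if_pos hjlt,
            show ((n.1 j + 1 : ℕ) : ℂ) - lam = ((n.1 j : ℕ) : ℂ) - (lam - 1) from by
              push_cast; ring]
        rw [hprodeq,
          show ((n.1 (Lpart m l last) + 1 : ℕ) : ℂ) - 1 = ((n.1 (Lpart m l last) : ℕ) : ℂ) from by
            push_cast; ring,
          show (((1 : ℕ)) : ℂ) - lam = 1 - lam from by push_cast; ring]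
        ring
      · rw [if_neg hi, mul_one, hl'i i hi]
        have hlt1 : Lpart m l i < L' := by
          have h4 := hbleL' i hi
          have h5 := hl i
          omega
        rw [if_pos hlt1]
        congr 1
        · rw [show ((n.1 (Lpart m l i) + 1 : ℕ) : ℂ) - 1 = ((n.1 (Lpart m l i) : ℕ) : ℂ) from by
            push_cast; ring]
        · apply Finset.prod_congr rfl
          intro j hj
          have hjlt : j < L' := by
            have h4 := (Finset.mem_Ico.1 hj).2
            have h5 := hbleL' i hi
            omega
          rw [if_pos hjlt,
            show ((n.1 j + 1 : ℕ) : ℂ) - lam = ((n.1 j : ℕ) : ℂ) - (lam - 1) from by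
              push_cast; ring]
    rw [Finset.prod_congr rfl fun i _ => key i, Finset.prod_mul_distrib,
      Finset.prod_ite_eq' Finset.univ last (fun _ => 1 / (1 - lam))]
    simp only [Finset.mem_univ, if_true]
    ring
  -- assemble
  rw [hb1, hb2, hb3, ← hsplit, hA, hB,
    show (1 : ℂ) / (1 - lam) = -(1 / (lam - 1)) from by
      rw [show (1 : ℂ) - lam = -(lam - 1) from by ring, one_div, one_div, inv_neg]]
  ring
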